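/- For a complex number $\nu$, the $2\times 2$ matrices $T = \begin{pmatrix} q^{\lambda} & 0 \\ 0 & -1 \end{pmatrix}$ and $\theta = \frac{1}{q^{\lambda}+1}\begin{pmatrix} q^{\lambda-\nu}+q^{\lambda+\nu}+c & q^{\lambda-\nu}-q^{\nu}+c \\ q^{-\nu}-q^{\lambda+\nu}-c & q^{-\nu}+q^{\nu}-c \end{pmatrix}$, where $c = q^{(\lambda+\lambda^*)/2} - q^{(\lambda-\lambda^*)/2}$, satisfy $T^2 = (q^{\lambda}-1)T + q^{\lambda}$ and $\theta T - T\theta^{-1} = (q^{\lambda}-1)\theta + c$; moreover the eigenvalues of $\theta$ are $q^{\nu}$ and $q^{-\nu}$. -/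

import Mathlib

set_option maxHeartbeats 1600000


/-- The explicit `2 × 2` matrices of the principal series `X(ν)` of
the rank-one affine Hecke algebra satisfy the quadratic and commutation relations,
and the eigenvalues of `θ` are `q^ν` and `q^(-ν)` (stated via the characteristic
polynomial). Here `q^z = exp(z log q)` for complex `z`. -/
theorem stmt10 (q lam lamstar : ℝ) (hq : 1 < q)
    (h0 : 0 < lamstar) (hl : lamstar < lam) (nu : ℂ) :
    let qp : ℂ → ℂ := fun z => Complex.exp (z * (Real.log q : ℂ))
    let Q : ℂ := qp (lam : ℂ)
    let c : ℂ := qp (((lam + lamstar) / 2 : ℝ) : ℂ) - qp (((lam - lamstar) / 2 : ℝ) : ℂ)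
    let T : Matrix (Fin 2) (Fin 2) ℂ := !![Q, 0; 0, -1]
    let th : Matrix (Fin 2) (Fin 2) ℂ :=
      (Q + 1)⁻¹ •
        !![qp ((lam : ℂ) - nu) + qp ((lam : ℂ) + nu) + c,
             qp ((lam : ℂ) - nu) - qp nu + c;
           qp (-nu) - qp ((lam : ℂ) + nu) - c,
             qp (-nu) + qp nu - c]
    T ^ 2 = (Q - 1) • T + Q • (1 : Matrix (Fin 2) (Fin 2) ℂ) ∧
    th * T - T * th⁻¹ = (Q - 1) • th + c • (1 : Matrix (Fin 2) (Fin 2) ℂ) ∧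
    th.charpoly = (Polynomial.X - Polynomial.C (qp nu)) *
      (Polynomial.X - Polynomial.C (qp (-nu))) := by
  intro qp Q c T th
  have qp_add : ∀ x y : ℂ, qp (x + y) = qp x * qp y := by
    intro x y; simp only [qp, add_mul, Complex.exp_add]
  have hab : qp nu * qp (-nu) = 1 := by
    rw [← qp_add]; simp [qp]
  have hQ1 : Q + 1 ≠ 0 := by
    have : Q = ((Real.exp (lam * Real.log q) : ℝ) : ℂ) := by
      simp [Q, qp, Complex.ofReal_exp, ← Complex.ofReal_mul]
    rw [this]
    have := Real.exp_pos (lam * Real.log q)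
    intro h
    rw [show ((Real.exp (lam * Real.log q) : ℝ) : ℂ) + 1 = ((Real.exp (lam * Real.log q) + 1 : ℝ) : ℂ) by push_cast; ring] at h
    norm_cast at h
    linarith
  have hmn : qp ((lam : ℂ) - nu) = Q * qp (-nu) := by
    rw [sub_eq_add_neg, qp_add]
  have hpl : qp ((lam : ℂ) + nu) = Q * qp nu := by rw [qp_add]
  set a := qp (-nu) with ha
  set b := qp nu with hb
  have hba : b * a = 1 := hab
  have hth : th = (Q + 1)⁻¹ •
      !![Q*a + Q*b + c, Q*a - b + c; a - Q*b - c, a + b - c] := by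
    simp only [th, hmn, hpl, ← ha, ← hb]
  have hT : T = !![Q, 0; 0, -1] := rfl
  clear_value a b Q c T th
  set M : Matrix (Fin 2) (Fin 2) ℂ :=
    (Q + 1)⁻¹ • !![a + b - c, -(Q*a - b + c); -(a - Q*b - c), Q*a + Q*b + c] with hM
  have hinv : th⁻¹ = M := by
    apply Matrix.inv_eq_right_inv
    rw [hth, hM]
    ext i j
    fin_cases i <;> fin_cases j <;>
      simp [Matrix.mul_apply, Fin.sum_univ_two, Matrix.one_apply] <;>
      field_simp <;>
      first
        | linear_combination (-(Q+1)^2) * hba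
        | linear_combination (-2*(Q+1)^2) * hba
        | linear_combination ((Q+1)^2) * hba
        | linear_combination (-(Q+1)^2) * hba
        | ring
  refine ⟨?_, ?_, ?_⟩
  · rw [pow_two, hT]
    ext i j
    fin_cases i <;> fin_cases j <;>
      simp [Matrix.mul_apply, Fin.sum_univ_two, Matrix.one_apply] <;> ring
  · rw [hinv, hth, hM, hT]
    ext i j
    fin_cases i <;> fin_cases j <;>
      simp [Matrix.mul_apply, Fin.sum_univ_two, Matrix.one_apply] <;>
      field_simp <;> ring
  · have htr : th.trace = b + a := by
      rw [hth]
      simp [Matrix.trace_fin_two]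
      field_simp
      ring
    have hdet : th.det = 1 := by
      rw [hth]
      simp [Matrix.det_fin_two, Matrix.smul_apply]
      field_simp
      first
        | linear_combination (-(Q+1)^2) * hba
        | linear_combination (2*(Q+1)^2) * hba
        | linear_combination (-2*(Q+1)^2) * hba
        | linear_combination ((Q+1)^2) * hba
    have h1 : th 0 0 + th 1 1 = b + a := by
      rwa [Matrix.trace_fin_two] at htr
    have h2 : th 0 0 * th 1 1 - th 0 1 * th 1 0 = b * a := by
      rw [Matrix.det_fin_two] at hdet; rw [hdet, hba]
    have h1' : Polynomial.C (th 0 0) + Polynomial.C (th 1 1)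
        = Polynomial.C b + Polynomial.C a := by
      rw [← map_add, ← map_add, h1]
    have h2' : Polynomial.C (th 0 0) * Polynomial.C (th 1 1)
        - Polynomial.C (th 0 1) * Polynomial.C (th 1 0)
        = Polynomial.C b * Polynomial.C a := by
      rw [← map_mul, ← map_mul, ← map_sub, h2, map_mul]
    show (Matrix.charmatrix th).det = _
    rw [Matrix.det_fin_two]
    rw [Matrix.charmatrix_apply_eq, Matrix.charmatrix_apply_eq,
      Matrix.charmatrix_apply_ne th 0 1 (by decide),
      Matrix.charmatrix_apply_ne th 1 0 (by decide)]
    linear_combination (-Polynomial.X : Polynomial ℂ) * h1' + h2'
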